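/- For parameters 0 < β < 1, t₀ > 0 and any real s₁, the lower truncation error of the RQ distribution satisfies ∫_{-∞}^{s₁} f_RQ(s) ds = 1/2 + arctan(tan(πβ/2)·tanh(β(s₁ − ln t₀)/2)) / (πβ). -/

import Mathlib

open MeasureTheory Real Filter Set Topology

/-- The Cole–Cole (RQ) distribution of relaxation times in the variable `s = ln t`. -/
noncomputable def fRQ (β t₀ : ℝ) (s : ℝ) : ℝ :=
  Real.sin (β * π) / (2 * π * (Real.cosh (β * (s - Real.log t₀)) + Real.cos (β * π)))

section aux

variable {β t₀ : ℝ}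

/-- The antiderivative. -/
noncomputable def FRQ (β t₀ : ℝ) (s : ℝ) : ℝ :=
  Real.arctan (Real.tan (π * β / 2) *
    (Real.sinh (β * (s - Real.log t₀) / 2) / Real.cosh (β * (s - Real.log t₀) / 2))) / (π * β)

lemma fRQ_hasDerivAt (hβ₀ : 0 < β) (hβ₁ : β < 1) (s : ℝ) :
    HasDerivAt (FRQ β t₀) (fRQ β t₀ s) s := by
  have hπ := Real.pi_pos
  set L := Real.log t₀ with hL
  set u : ℝ := β * (s - L) / 2 with hu
  have hg : HasDerivAt (fun s : ℝ => β * (s - L) / 2) (β / 2) s := by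
    simpa using ((hasDerivAt_id s).sub_const L).const_mul β |>.div_const 2
  have hsinh : HasDerivAt (fun s : ℝ => Real.sinh (β * (s - L) / 2))
      (Real.cosh u * (β / 2)) s := by
    have := (Real.hasDerivAt_sinh (β * (s - L) / 2)).comp s hg; exact this
  have hcosh : HasDerivAt (fun s : ℝ => Real.cosh (β * (s - L) / 2))
      (Real.sinh u * (β / 2)) s := by
    have := (Real.hasDerivAt_cosh (β * (s - L) / 2)).comp s hg; exact this
  have hcoshpos : 0 < Real.cosh u := Real.cosh_pos u
  have hdiv : HasDerivAt (fun s : ℝ =>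
      Real.sinh (β * (s - L) / 2) / Real.cosh (β * (s - L) / 2))
      ((Real.cosh u * (β / 2) * Real.cosh u - Real.sinh u * (Real.sinh u * (β / 2))) /
        Real.cosh u ^ 2) s := hsinh.div hcosh hcoshpos.ne'
  have hmul := hdiv.const_mul (Real.tan (π * β / 2))
  have harc := hmul.arctan
  have hF := harc.div_const (π * β)
  have hF' : HasDerivAt (FRQ β t₀) _ s := hF
  convert hF' using 1
  -- now prove the value equality
  set c := Real.cos (π * β / 2) with hc
  set sn := Real.sin (π * β / 2) with hsn
  have hcpos : 0 < c := by
    apply Real.cos_pos_of_mem_Ioo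
    constructor <;> nlinarith
  have htan : Real.tan (π * β / 2) = sn / c := Real.tan_eq_sin_div_cos _
  have hsin2 : Real.sin (β * π) = 2 * sn * c := by
    rw [show β * π = 2 * (π * β / 2) by ring, Real.sin_two_mul]
  have hcos2 : Real.cos (β * π) = 2 * c ^ 2 - 1 := by
    rw [show β * π = 2 * (π * β / 2) by ring, Real.cos_two_mul]
  have hcosh2 : Real.cosh (β * (s - L)) = 2 * Real.cosh u ^ 2 - 1 := by
    rw [show β * (s - L) = 2 * u by rw [hu]; ring, Real.cosh_two_mul]
    have := Real.cosh_sq_sub_sinh_sq u; linarith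
  have hpy : sn ^ 2 = 1 - c ^ 2 := by
    have := Real.sin_sq_add_cos_sq (π * β / 2); rw [← hc, ← hsn] at this; linarith
  have hsh : Real.sinh u ^ 2 = Real.cosh u ^ 2 - 1 := by
    have := Real.cosh_sq_sub_sinh_sq u; linarith
  have hden : 0 < Real.cosh u ^ 2 + c ^ 2 - 1 := by nlinarith [Real.one_le_cosh u]
  have h1 : (0:ℝ) < 1 + (Real.tan (π * β / 2) * (Real.sinh u / Real.cosh u)) ^ 2 := by
    positivity
  have hnum : Real.cosh u * (β / 2) * Real.cosh u - Real.sinh u * (Real.sinh u * (β / 2))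
      = β / 2 := by nlinarith [hsh]
  have h2 : 1 + (sn / c * (Real.sinh u / Real.cosh u)) ^ 2
      = (Real.cosh u ^ 2 + c ^ 2 - 1) / (c ^ 2 * Real.cosh u ^ 2) := by
    field_simp
    linear_combination Real.sinh u ^ 2 * hpy + (1 - c ^ 2) * hsh
  simp only [fRQ]
  rw [hsin2, hcosh2, hcos2, htan, ← hu, hnum, h2]
  have hdenne : 2 * Real.cosh u ^ 2 - 1 + (2 * c ^ 2 - 1) ≠ 0 := by nlinarith [hden]
  have hdenne2 : Real.cosh u ^ 2 + c ^ 2 - 1 ≠ 0 := hden.ne'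
  field_simp
  ring

lemma fRQ_nonneg (hβ₀ : 0 < β) (hβ₁ : β < 1) (s : ℝ) : 0 ≤ fRQ β t₀ s := by
  have hπ := Real.pi_pos
  have hs : 0 ≤ Real.sin (β * π) :=
    Real.sin_nonneg_of_nonneg_of_le_pi (by positivity) (by nlinarith)
  have hc : (-1 : ℝ) < Real.cos (β * π) := by
    have := Real.cos_lt_cos_of_nonneg_of_le_pi (x := β * π) (y := π)
      (by positivity) le_rfl (by nlinarith)
    rwa [Real.cos_pi] at this
  have hch := Real.one_le_cosh (β * (s - Real.log t₀))
  have : 0 < 2 * π * (Real.cosh (β * (s - Real.log t₀)) + Real.cos (β * π)) := by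
    nlinarith
  exact div_nonneg hs this.le

lemma FRQ_tendsto (hβ₀ : 0 < β) (hβ₁ : β < 1) :
    Tendsto (FRQ β t₀) atBot (𝓝 (-(1/2 : ℝ))) := by
  have hπ := Real.pi_pos
  have htanh : Tendsto (fun u : ℝ => Real.sinh u / Real.cosh u) atBot (𝓝 (-1)) := by
    have heq : ∀ u : ℝ, Real.sinh u / Real.cosh u =
        (Real.exp u * Real.exp u - 1) / (Real.exp u * Real.exp u + 1) := by
      intro u
      have he : 0 < Real.exp u := Real.exp_pos u
      have hchpos : 0 < Real.cosh u := Real.cosh_pos u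
      rw [Real.sinh_eq, Real.cosh_eq, Real.exp_neg]
      rw [div_eq_div_iff (by rw [Real.cosh_eq, Real.exp_neg] at hchpos; positivity)
        (by positivity)]
      field_simp
    have hlim : Tendsto (fun u : ℝ => Real.exp u * Real.exp u) atBot (𝓝 0) := by
      simpa using Real.tendsto_exp_atBot.mul Real.tendsto_exp_atBot
    have := ((hlim.sub_const 1).div ((hlim.add_const 1)) (by norm_num))
    simp only [zero_sub, zero_add, div_one] at this
    exact (this.congr (fun u => (heq u).symm))
  have hlin : Tendsto (fun s : ℝ => β * (s - Real.log t₀) / 2) atBot atBot := by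
    apply Tendsto.atBot_div_const (by norm_num)
    apply Tendsto.const_mul_atBot hβ₀
    exact tendsto_atBot_add_const_right _ _ tendsto_id
  have h1 : Tendsto (fun s : ℝ =>
      Real.sinh (β * (s - Real.log t₀) / 2) / Real.cosh (β * (s - Real.log t₀) / 2))
      atBot (𝓝 (-1)) := htanh.comp hlin
  have h2 := ((Real.continuous_arctan.tendsto _).comp
    ((h1.const_mul (Real.tan (π * β / 2))))).div_const (π * β)
  have harg : Real.tan (π * β / 2) * (-1 : ℝ) = -Real.tan (π * β / 2) := by ring
  rw [harg] at h2
  have : Real.arctan (-Real.tan (π * β / 2)) / (π * β) = -(1/2 : ℝ) := by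
    rw [Real.arctan_neg, Real.arctan_tan (by nlinarith) (by nlinarith)]
    field_simp
  rw [this] at h2
  exact h2

lemma fRQ_integrableOn (hβ₀ : 0 < β) (hβ₁ : β < 1) (s₁ : ℝ) :
    IntegrableOn (fRQ β t₀) (Iic s₁) := by
  have hπ := Real.pi_pos
  have hcont : Continuous (fRQ β t₀) := by
    apply Continuous.div (by continuity) (by continuity)
    intro s
    have hc : (-1 : ℝ) < Real.cos (β * π) := by
      have := Real.cos_lt_cos_of_nonneg_of_le_pi (x := β * π) (y := π)
        (by positivity) le_rfl (by nlinarith)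
      rwa [Real.cos_pi] at this
    have hch := Real.one_le_cosh (β * (s - Real.log t₀))
    have h0 : 0 < 2 * π * (Real.cosh (β * (s - Real.log t₀)) + Real.cos (β * π)) := by
      nlinarith
    exact h0.ne'
  apply integrableOn_Iic_of_intervalIntegral_norm_bounded
    (FRQ β t₀ s₁ + 1 / (2 * β)) s₁ (fun i : ℝ => hcont.integrableOn_Ioc)
    (tendsto_id (α := ℝ))
  apply Filter.Eventually.of_forall
  intro i
  have hfi : ∀ x, ‖fRQ β t₀ x‖ = fRQ β t₀ x := fun x =>
    Real.norm_of_nonneg (fRQ_nonneg hβ₀ hβ₁ x)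
  have hint : ∫ x in i..s₁, ‖fRQ β t₀ x‖ = ∫ x in i..s₁, fRQ β t₀ x := by
    apply intervalIntegral.integral_congr; intro x _; exact hfi x
  simp only [id_eq]
  rw [hint]
  have hftc : ∫ x in i..s₁, fRQ β t₀ x = FRQ β t₀ s₁ - FRQ β t₀ i :=
    intervalIntegral.integral_eq_sub_of_hasDerivAt
      (fun x _ => fRQ_hasDerivAt hβ₀ hβ₁ x) (hcont.intervalIntegrable i s₁)
  rw [hftc]
  have hbd : -(1 / (2 * β)) ≤ FRQ β t₀ i := by
    have h := (Real.neg_pi_div_two_lt_arctan (Real.tan (π * β / 2) *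
      (Real.sinh (β * (i - Real.log t₀) / 2) / Real.cosh (β * (i - Real.log t₀) / 2)))).le
    rw [FRQ, show -(1 / (2 * β)) = (-(π / 2)) / (π * β) by field_simp]
    gcongr
  linarith

end aux

/-- **Lower truncation error of the RQ distribution.**
For `0 < β < 1`, `t₀ > 0` and any `s₁`,
`∫_{-∞}^{s₁} f_RQ(s) ds = 1/2 + arctan(tan(πβ/2) tanh(β(s₁ − ln t₀)/2))/(πβ)`. -/
theorem fRQ_lower_truncation (β t₀ s₁ : ℝ) (hβ₀ : 0 < β) (hβ₁ : β < 1) (ht₀ : 0 < t₀) :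
    ∫ s in Set.Iic s₁, fRQ β t₀ s =
      1 / 2 + Real.arctan (Real.tan (π * β / 2) *
        Real.tanh (β * (s₁ - Real.log t₀) / 2)) / (π * β) := by
  rw [integral_Iic_of_hasDerivAt_of_tendsto' (f := FRQ β t₀)
    (fun x _ => fRQ_hasDerivAt hβ₀ hβ₁ x) (fRQ_integrableOn hβ₀ hβ₁ s₁)
    (FRQ_tendsto hβ₀ hβ₁)]
  rw [FRQ, Real.tanh_eq_sinh_div_cosh]
  ring
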